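/- For any matrices x, x' ∈ F_q^{n×m}, the subspace distance between their liftings satisfies d_S(I(x), I(x')) = 2·rank(x' − x) = 2·d_R(x, x'). Consequently, for any rank-metric code C ⊆ F_q^{n×m} with at least two elements, the minimum subspace distance of the lifted code I(C) = {I(x) : x ∈ C} equals twice the minimum rank distance of C. -/

import Mathlib

/-- The row space of a matrix: the span of its rows. -/
noncomputable def rowSpace {F : Type*} [Field F] {ι κ : Type*}
    (M : Matrix ι κ F) : Submodule F (κ → F) :=
  Submodule.span F (Set.range fun i => M i)

/-- The subspace distance `d_S(U,V) = dim(U + V) - dim(U ∩ V)`. -/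
noncomputable def sDist {F : Type*} [Field F] {κ : Type*}
    (U V : Submodule F (κ → F)) : ℕ :=
  Module.finrank F ↥(U ⊔ V) - Module.finrank F ↥(U ⊓ V)

/-- The lifting `I(x)` of a matrix `x ∈ F_q^{n×m}`: the row space of the
matrix `[I_n | x]`. -/
noncomputable def lifting {F : Type*} [Field F] [DecidableEq F] {n m : ℕ}
    (x : Matrix (Fin n) (Fin m) F) : Submodule F ((Fin n ⊕ Fin m) → F) :=
  rowSpace (Matrix.fromCols (1 : Matrix (Fin n) (Fin n) F) x)

section Aux

open Matrix

variable {F : Type*} [Field F] [DecidableEq F] {n m : ℕ}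

lemma lifting_eq_range (x : Matrix (Fin n) (Fin m) F) :
    lifting x
      = LinearMap.range (Matrix.fromCols (1 : Matrix (Fin n) (Fin n) F) x).vecMulLinear := by
  rw [lifting, rowSpace, range_vecMulLinear]; rfl

lemma mem_lifting (x : Matrix (Fin n) (Fin m) F) (u : (Fin n ⊕ Fin m) → F) :
    u ∈ lifting x ↔ ∃ v : Fin n → F, Sum.elim v (v ᵥ* x) = u := by
  rw [lifting_eq_range]
  constructor
  · rintro ⟨v, rfl⟩
    exact ⟨v, by simp⟩
  · rintro ⟨v, rfl⟩
    exact ⟨v, by simp⟩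

lemma finrank_lifting (x : Matrix (Fin n) (Fin m) F) :
    Module.finrank F (lifting x) = n := by
  rw [lifting_eq_range]
  have h := LinearMap.finrank_range_add_finrank_ker
    (Matrix.fromCols (1 : Matrix (Fin n) (Fin n) F) x).vecMulLinear
  have hker :
      LinearMap.ker (Matrix.fromCols (1 : Matrix (Fin n) (Fin n) F) x).vecMulLinear = ⊥ := by
    rw [LinearMap.ker_eq_bot']
    intro v hv
    funext j
    have := congrFun hv (Sum.inl j)
    simpa using this
  rw [hker] at h
  simpa using h

omit [DecidableEq F] in
lemma finrank_ker_vecMulLinear (y : Matrix (Fin n) (Fin m) F) :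
    Module.finrank F (LinearMap.ker y.vecMulLinear) = n - y.rank := by
  have h := LinearMap.finrank_range_add_finrank_ker y.vecMulLinear
  have hr : Module.finrank F (LinearMap.range y.vecMulLinear) = y.rank := by
    rw [range_vecMulLinear, y.rank_eq_finrank_span_row]
  rw [hr] at h
  simp only [Module.finrank_pi, Fintype.card_fin] at h
  omega

lemma finrank_lifting_inf (x x' : Matrix (Fin n) (Fin m) F) :
    Module.finrank F ↥(lifting x ⊓ lifting x') = n - (x' - x).rank := by
  have hinj : Function.Injective
      ⇑(Matrix.fromCols (1 : Matrix (Fin n) (Fin n) F) x).vecMulLinear := by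
    rw [← LinearMap.ker_eq_bot, LinearMap.ker_eq_bot']
    intro v hv
    funext j
    have := congrFun hv (Sum.inl j)
    simpa using this
  have heq : lifting x ⊓ lifting x' =
      Submodule.map (Matrix.fromCols (1 : Matrix (Fin n) (Fin n) F) x).vecMulLinear
        (LinearMap.ker (x' - x).vecMulLinear) := by
    ext u
    simp only [Submodule.mem_inf, mem_lifting, Submodule.mem_map, LinearMap.mem_ker,
      Matrix.vecMulLinear_apply]
    constructor
    · rintro ⟨⟨v, rfl⟩, ⟨w, hw⟩⟩
      have hvw : w = v := by
        funext j; exact congrFun hw (Sum.inl j)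
      subst hvw
      have h2 : w ᵥ* x' = w ᵥ* x := by
        funext j; exact congrFun hw (Sum.inr j)
      refine ⟨w, ?_, by simp⟩
      rw [Matrix.vecMul_sub, h2, sub_self]
    · rintro ⟨v, hv, rfl⟩
      have h2 : v ᵥ* x' = v ᵥ* x := by
        have h3 := Matrix.vecMul_sub x' x v
        rw [hv] at h3
        exact sub_eq_zero.mp h3.symm
      refine ⟨⟨v, by simp⟩, ⟨v, by simp [h2]⟩⟩
  rw [heq, ← LinearEquiv.finrank_eq (Submodule.equivMapOfInjective _ hinj _),
    finrank_ker_vecMulLinear]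

omit [DecidableEq F] in
lemma rank_pos_of_ne_zero (y : Matrix (Fin n) (Fin m) F) (hy : y ≠ 0) : 0 < y.rank := by
  rcases Nat.eq_zero_or_pos y.rank with h | h
  · exfalso
    rw [y.rank_eq_finrank_span_row, Submodule.finrank_eq_zero] at h
    apply hy
    ext i j
    have hm : y i ∈ Submodule.span F (Set.range y.row) := Submodule.subset_span ⟨i, rfl⟩
    rw [h] at hm
    simpa using congrFun hm j
  · exact h

lemma sDist_lifting (x x' : Matrix (Fin n) (Fin m) F) :
    sDist (lifting x) (lifting x') = 2 * (x' - x).rank := by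
  have hr : (x' - x).rank ≤ n := (x' - x).rank_le_height
  have hinf := finrank_lifting_inf x x'
  have hsum := Submodule.finrank_sup_add_finrank_inf_eq (lifting x) (lifting x')
  rw [finrank_lifting, finrank_lifting, hinf] at hsum
  rw [sDist, hinf]
  omega

end Aux

/-- `d_S(I(x), I(x')) = 2·rank(x' − x)`, and for any rank-metric
code `C` with at least two elements the minimum subspace distance of the
lifted code `I(C)` is twice the minimum rank distance of `C`. -/
theorem lifting_distance
    {F : Type*} [Field F] [Fintype F] [DecidableEq F] {n m : ℕ}
    (C : Set (Matrix (Fin n) (Fin m) F))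
    (hC : ∃ a ∈ C, ∃ b ∈ C, a ≠ b) :
    (∀ x x' : Matrix (Fin n) (Fin m) F,
        sDist (lifting x) (lifting x') = 2 * (x' - x).rank) ∧
    sInf {D : ℕ | ∃ U ∈ lifting '' C, ∃ V ∈ lifting '' C, U ≠ V ∧ D = sDist U V}
      = 2 * sInf {e : ℕ | ∃ a ∈ C, ∃ b ∈ C, a ≠ b ∧ e = (b - a).rank} := by
  refine ⟨fun x x' => sDist_lifting x x', ?_⟩
  set S : Set ℕ := {e : ℕ | ∃ a ∈ C, ∃ b ∈ C, a ≠ b ∧ e = (b - a).rank} with hS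
  set T : Set ℕ :=
    {D : ℕ | ∃ U ∈ lifting '' C, ∃ V ∈ lifting '' C, U ≠ V ∧ D = sDist U V} with hT
  -- distinct matrices have distinct liftings
  have hlift_ne : ∀ a b : Matrix (Fin n) (Fin m) F, a ≠ b → lifting a ≠ lifting b := by
    intro a b hab h
    have h1 := sDist_lifting a b
    rw [h] at h1
    rw [sDist, sup_idem, inf_idem, Nat.sub_self] at h1
    have h2 : 0 < (b - a).rank :=
      rank_pos_of_ne_zero _ (sub_ne_zero.mpr (Ne.symm hab))
    omega
  have hTS : T = (fun e => 2 * e) '' S := by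
    ext D
    constructor
    · rintro ⟨U, ⟨a, ha, rfl⟩, V, ⟨b, hb, rfl⟩, hUV, rfl⟩
      have hab : a ≠ b := fun h => hUV (by rw [h])
      exact ⟨(b - a).rank, ⟨a, ha, b, hb, hab, rfl⟩, (sDist_lifting a b).symm⟩
    · rintro ⟨e, ⟨a, ha, b, hb, hab, rfl⟩, rfl⟩
      exact ⟨lifting a, ⟨a, ha, rfl⟩, lifting b, ⟨b, hb, rfl⟩, hlift_ne a b hab,
        (sDist_lifting a b).symm⟩
  have hSne : S.Nonempty := by
    obtain ⟨a, ha, b, hb, hab⟩ := hC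
    exact ⟨(b - a).rank, a, ha, b, hb, hab, rfl⟩
  have hTne : T.Nonempty := by
    rw [hTS]; exact hSne.image _
  apply le_antisymm
  · have : 2 * sInf S ∈ T := by
      rw [hTS]
      exact ⟨sInf S, Nat.sInf_mem hSne, rfl⟩
    exact Nat.sInf_le this
  · obtain ⟨e, he, heq⟩ : sInf T ∈ (fun e => 2 * e) '' S := by
      rw [← hTS]; exact Nat.sInf_mem hTne
    have h4 : sInf S ≤ e := Nat.sInf_le he
    simp only at heq
    omega
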